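/- arXiv:math/0703155 — 2 statements merged into one kernel-verified Lean document; each statement's English description precedes it below -/
import Mathlib

section
/- Quadratic doubling inequality for sup-convolutions: Let n₁, n₂ ≥ 1, let K be a nonempty set, and let w₁ : ℝ^{n₁}×K → ℝ and w₂ : ℝ^{n₂}×K → ℝ be bounded functions. Let A be a symmetric (n₁+n₂)×(n₁+n₂) real matrix, let ε > 0 and set λ = 1/ε + ‖A‖, where ‖A‖ is the operator norm. Assume that w₁(x',k) − w₂(y',k) ≤ ⟨A(x',y'),(x',y')⟩ for all (x',y',k) ∈ ℝ^{n₁}×ℝ^{n₂}×K. Then for all x,x' ∈ ℝ^{n₁}, all y,y' ∈ ℝ^{n₂} and all k ∈ K, one has w₁(x',k) − w₂(y',k) ≤ ⟨(A+εA²)(x,y),(x,y)⟩ + λ(|x'−x|² + |y'−y|²). -/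
open scoped RealInnerProductSpace
open Set Filter Topology

noncomputable section

abbrev Euc (n : ℕ) := EuclideanSpace ℝ (Fin n)

/-- Quadratic form of a matrix. -/
def quadF {m : Type*} [Fintype m] (A : Matrix m m ℝ) (x : m → ℝ) : ℝ :=
  ∑ i, ∑ j, A i j * x i * x j

/-- Operator norm of a matrix, acting on Euclidean space. -/
def opn {m : Type*} [Fintype m] [DecidableEq m] (A : Matrix m m ℝ) : ℝ :=
  ‖Matrix.toEuclideanCLM (𝕜 := ℝ) A‖

/-- Concatenation of two vectors. -/
def catv {n1 n2 : ℕ} (x : Euc n1) (y : Euc n2) : Fin n1 ⊕ Fin n2 → ℝ :=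
  Sum.elim (fun i => x i) (fun j => y j)

open Matrix

lemma quadF_eq {m : Type*} [Fintype m] (A : Matrix m m ℝ) (v : m → ℝ) :
    quadF A v = v ⬝ᵥ A.mulVec v := by
  simp [quadF, dotProduct, Matrix.mulVec, Finset.mul_sum]
  exact Finset.sum_congr rfl fun i _ => Finset.sum_congr rfl fun j _ => by ring

lemma key {m : Type*} [Fintype m] [DecidableEq m] (A : Matrix m m ℝ) (hA : A.IsSymm)
    {ε : ℝ} (hε : 0 < ε) (z h : m → ℝ) :
    quadF A (z + h) ≤ quadF (A + ε • (A * A)) z + (1 / ε + opn A) * (∑ i, h i ^ 2) := by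
  have hAz : ∀ u w : m → ℝ, u ⬝ᵥ A.mulVec w = w ⬝ᵥ A.mulVec u := by
    intro u w
    rw [Matrix.dotProduct_mulVec, ← Matrix.mulVec_transpose, hA.eq, dotProduct_comm]
  have expand : quadF A (z + h) =
      quadF A z + 2 * (h ⬝ᵥ A.mulVec z) + h ⬝ᵥ A.mulVec h := by
    rw [quadF_eq, quadF_eq, Matrix.mulVec_add, dotProduct_add, add_dotProduct,
      add_dotProduct, hAz z h]
    ring
  have b1 : 2 * (h ⬝ᵥ A.mulVec z) ≤
      ε * ((A.mulVec z) ⬝ᵥ (A.mulVec z)) + (1 / ε) * ∑ i, h i ^ 2 := by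
    have : ∀ i ∈ Finset.univ, 2 * (h i * A.mulVec z i) ≤
        ε * (A.mulVec z i * A.mulVec z i) + (1 / ε) * h i ^ 2 := by
      intro i _
      have h1 : ε * (1 / ε) = 1 := mul_one_div_cancel hε.ne'
      nlinarith [sq_nonneg (ε * A.mulVec z i - h i), hε, one_div_pos.mpr hε,
        mul_nonneg (le_of_lt (one_div_pos.mpr hε)) (sq_nonneg (ε * A.mulVec z i - h i))]
    calc 2 * (h ⬝ᵥ A.mulVec z) = ∑ i, 2 * (h i * A.mulVec z i) := by
          simp [dotProduct, Finset.mul_sum]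
      _ ≤ ∑ i, (ε * (A.mulVec z i * A.mulVec z i) + (1 / ε) * h i ^ 2) :=
          Finset.sum_le_sum this
      _ = ε * ((A.mulVec z) ⬝ᵥ (A.mulVec z)) + (1 / ε) * ∑ i, h i ^ 2 := by
          simp [dotProduct, Finset.sum_add_distrib, Finset.mul_sum]
  have b2 : (A.mulVec z) ⬝ᵥ (A.mulVec z) = z ⬝ᵥ (A * A).mulVec z := by
    rw [hAz, Matrix.mulVec_mulVec]
  have b3 : h ⬝ᵥ A.mulVec h ≤ opn A * ∑ i, h i ^ 2 := by
    set H : EuclideanSpace ℝ m := (WithLp.equiv 2 (m → ℝ)).symm h with hH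
    have hnorm : ∑ i, h i ^ 2 = ‖H‖ ^ 2 := by
      rw [EuclideanSpace.norm_sq_eq]
      simp [hH, Real.norm_eq_abs, sq_abs]
    have heq : h ⬝ᵥ A.mulVec h = ⟪H, (Matrix.toEuclideanCLM (𝕜 := ℝ) A) H⟫ := by
      simp [hH, Matrix.toEuclideanCLM_toLp, PiLp.inner_apply,
        dotProduct, Matrix.toLin'_apply, Matrix.mulVec]
      exact Finset.sum_congr rfl fun i _ => mul_comm _ _
    rw [heq, hnorm]
    calc ⟪H, (Matrix.toEuclideanCLM (𝕜 := ℝ) A) H⟫ ≤ ‖H‖ * ‖(Matrix.toEuclideanCLM (𝕜 := ℝ) A) H‖ :=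
          real_inner_le_norm _ _
      _ ≤ ‖H‖ * (opn A * ‖H‖) := by
          apply mul_le_mul_of_nonneg_left ((Matrix.toEuclideanCLM (𝕜 := ℝ) A).le_opNorm H)
            (norm_nonneg _)
      _ = opn A * ‖H‖ ^ 2 := by ring
  have split : quadF (A + ε • (A * A)) z = quadF A z + ε * (z ⬝ᵥ (A * A).mulVec z) := by
    rw [quadF_eq, quadF_eq, Matrix.add_mulVec, Matrix.smul_mulVec,
      dotProduct_add, dotProduct_smul, smul_eq_mul]
  rw [expand, split]
  nlinarith [b1, b3, b2]

lemma norm_sq_euc {n : ℕ} (v : Euc n) : ‖v‖ ^ 2 = ∑ i, v i ^ 2 := by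
  rw [EuclideanSpace.norm_sq_eq]
  simp [Real.norm_eq_abs, sq_abs]

/-- **Quadratic doubling inequality for sup-convolutions** (step 1 of the proof of the
maximum principle). -/
theorem quadratic_doubling_supconvolution {n1 n2 : ℕ} (hn1 : 1 ≤ n1) (hn2 : 1 ≤ n2)
    (K : Type*) [Nonempty K]
    (w1 : Euc n1 → K → ℝ) (w2 : Euc n2 → K → ℝ)
    (hw1 : ∃ M : ℝ, ∀ x k, |w1 x k| ≤ M) (hw2 : ∃ M : ℝ, ∀ y k, |w2 y k| ≤ M)
    (A : Matrix (Fin n1 ⊕ Fin n2) (Fin n1 ⊕ Fin n2) ℝ) (hA : A.IsSymm)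
    {ε : ℝ} (hε : 0 < ε)
    (hineq : ∀ (x' : Euc n1) (y' : Euc n2) (k : K),
        w1 x' k - w2 y' k ≤ quadF A (catv x' y')) :
    ∀ (x x' : Euc n1) (y y' : Euc n2) (k : K),
      w1 x' k - w2 y' k ≤
        quadF (A + ε • (A * A)) (catv x y)
          + (1 / ε + opn A) * (‖x' - x‖ ^ 2 + ‖y' - y‖ ^ 2) := by
  intro x x' y y' k
  have hcat : catv x' y' = catv x y + catv (x' - x) (y' - y) := by
    funext i
    cases i with
    | inl i => simp [catv]
    | inr j => simp [catv]
  have hsum : ∑ i, (catv (x' - x) (y' - y)) i ^ 2 = ‖x' - x‖ ^ 2 + ‖y' - y‖ ^ 2 := by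
    rw [norm_sq_euc, norm_sq_euc, Fintype.sum_sum_type]
    rfl
  calc w1 x' k - w2 y' k ≤ quadF A (catv x' y') := hineq x' y' k
    _ = quadF A (catv x y + catv (x' - x) (y' - y)) := by rw [hcat]
    _ ≤ quadF (A + ε • (A * A)) (catv x y)
          + (1 / ε + opn A) * (∑ i, (catv (x' - x) (y' - y)) i ^ 2) :=
        key A hA hε _ _
    _ = _ := by rw [hsum]

end
end

section
/- Expansivity of the gradient map at penalized maximum points: Let J ≥ 1, α > 0, let O ⊆ ℝ^J be an open convex set, and let h, g : O → ℝ with g concave. Let ζ₁, ζ₂ ∈ ℝ^J and q₁, q₂ ∈ O be such that, for k = 1,2, the function q' ↦ h(q') − g(q') + α|q'|² − ⟨ζ_k, q'⟩ attains its maximum over O at q_k, and assume that h and g are (Fréchet) differentiable at both q₁ and q₂. Then ⟨∇h(q₂) − ∇h(q₁), q₁ − q₂⟩ ≥ 2α|q₁ − q₂|²; in particular |q₁ − q₂| ≤ (1/(2α)) |∇h(q₁) − ∇h(q₂)|. -/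
open scoped RealInnerProductSpace
open Set Filter Topology

noncomputable section

lemma inner_gradient_eq {J : ℕ} (f : Euc J → ℝ) (x v : Euc J) :
    ⟪gradient f x, v⟫ = fderiv ℝ f x v :=
  InnerProductSpace.toDual_symm_apply

lemma concave_foc {J : ℕ} {O : Set (Euc J)} {g : Euc J → ℝ}
    (hg : ConcaveOn ℝ O g) {q1 q2 : Euc J} (hq1 : q1 ∈ O) (hq2 : q2 ∈ O)
    (hdg1 : DifferentiableAt ℝ g q1) :
    g q2 - g q1 ≤ fderiv ℝ g q1 (q2 - q1) := by
  set v := q2 - q1 with hv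
  have hl : ∀ t : ℝ, HasDerivAt (fun t : ℝ => q1 + t • v) v t := fun t => by
    simpa using ((hasDerivAt_id t).smul_const v).const_add q1
  have hφ : HasDerivAt (fun t : ℝ => g (q1 + t • v)) (fderiv ℝ g q1 v) 0 := by
    have hg1 : HasFDerivAt g (fderiv ℝ g q1) (q1 + (0:ℝ) • v) := by
      simpa using hdg1.hasFDerivAt
    exact hg1.comp_hasDerivAt 0 (hl 0)
  have hslope : Tendsto (slope (fun t : ℝ => g (q1 + t • v)) 0) (𝓝[>] 0)
      (𝓝 (fderiv ℝ g q1 v)) :=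
    (hasDerivAt_iff_tendsto_slope.mp hφ).mono_left
      (nhdsWithin_mono 0 fun t ht => ne_of_gt ht)
  refine ge_of_tendsto hslope ?_
  · filter_upwards [Ioc_mem_nhdsGT_of_mem (by norm_num : (0:ℝ) ∈ Ico (0:ℝ) 1)]
      with t ht
    have h01 : (0:ℝ) < t := ht.1
    have ht1 : t ≤ 1 := ht.2
    have hconc := hg.2 hq1 hq2 (show (0:ℝ) ≤ 1 - t by linarith)
      (show (0:ℝ) ≤ t by linarith) (show (1 - t) + t = 1 by ring)
    have hpt : (1 - t) • q1 + t • q2 = q1 + t • v := by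
      simp [hv, smul_sub, sub_smul]; abel
    rw [hpt] at hconc
    have hsl : slope (fun t : ℝ => g (q1 + t • v)) 0 t
        = (g (q1 + t • v) - g q1) / t := by
      simp [slope_def_field]
    rw [hsl, le_div_iff₀ h01]
    have h' : (1 - t) * g q1 + t * g q2 ≤ g (q1 + t • v) := by
      simpa [smul_eq_mul] using hconc
    nlinarith [h']

lemma foc {J : ℕ} {α : ℝ} {O : Set (Euc J)} (hOopen : IsOpen O)
    {h g : Euc J → ℝ} {ζ q : Euc J} (hq : q ∈ O)
    (hmax : ∀ q' ∈ O,
      h q' - g q' + α * ‖q'‖ ^ 2 - ⟪ζ, q'⟫ ≤ h q - g q + α * ‖q‖ ^ 2 - ⟪ζ, q⟫)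
    (hdh : DifferentiableAt ℝ h q) (hdg : DifferentiableAt ℝ g q) :
    ∀ v, fderiv ℝ h q v - fderiv ℝ g q v + α * (2 * ⟪q, v⟫) - ⟪ζ, v⟫ = 0 := by
  set F : Euc J → ℝ := fun q' => h q' - g q' + α * ‖q'‖ ^ 2 - ⟪ζ, q'⟫ with hF
  have hlm : IsLocalMax F q := by
    filter_upwards [hOopen.mem_nhds hq] with x hx using hmax x hx
  have hD : HasFDerivAt F
      (fderiv ℝ h q - fderiv ℝ g q + α • (2 • (innerSL ℝ q)) - innerSL ℝ ζ) q := by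
    exact ((hdh.hasFDerivAt.sub hdg.hasFDerivAt).add
      ((hasStrictFDerivAt_norm_sq q).hasFDerivAt.const_mul α)).sub
      ((innerSL ℝ ζ).hasFDerivAt)
  have h0 : fderiv ℝ h q - fderiv ℝ g q + α • (2 • (innerSL ℝ q)) - innerSL ℝ ζ = 0 := by
    rw [← hD.fderiv]; exact hlm.fderiv_eq_zero
  intro v
  have := congrFun (congrArg (fun (L : Euc J →L[ℝ] ℝ) => (L : Euc J → ℝ)) h0) v
  simpa [mul_comm, mul_assoc, mul_left_comm] using this

/-- **Expansivity of the gradient map at penalized maximum points** (step 3 of the proof of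
the maximum principle): if `q' ↦ h(q') - g(q') + α|q'|² - ⟨ζ_k, q'⟩` attains its maximum over
the open convex set `O` at `q_k` (k = 1,2), with `g` concave, then the gradient map of `h`
expands distances by the factor `2α`. -/
theorem gradient_expansive_at_max {J : ℕ} (hJ : 1 ≤ J) {α : ℝ} (hα : 0 < α)
    (O : Set (Euc J)) (hOopen : IsOpen O) (hOconv : Convex ℝ O)
    (h g : Euc J → ℝ) (hg : ConcaveOn ℝ O g)
    (ζ1 ζ2 : Euc J) (q1 q2 : Euc J) (hq1 : q1 ∈ O) (hq2 : q2 ∈ O)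
    (hmax1 : ∀ q' ∈ O,
      h q' - g q' + α * ‖q'‖ ^ 2 - ⟪ζ1, q'⟫ ≤ h q1 - g q1 + α * ‖q1‖ ^ 2 - ⟪ζ1, q1⟫)
    (hmax2 : ∀ q' ∈ O,
      h q' - g q' + α * ‖q'‖ ^ 2 - ⟪ζ2, q'⟫ ≤ h q2 - g q2 + α * ‖q2‖ ^ 2 - ⟪ζ2, q2⟫)
    (hdh1 : DifferentiableAt ℝ h q1) (hdh2 : DifferentiableAt ℝ h q2)
    (hdg1 : DifferentiableAt ℝ g q1) (hdg2 : DifferentiableAt ℝ g q2) :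
    2 * α * ‖q1 - q2‖ ^ 2 ≤ ⟪gradient h q2 - gradient h q1, q1 - q2⟫ ∧
    ‖q1 - q2‖ ≤ (1 / (2 * α)) * ‖gradient h q1 - gradient h q2‖ := by
  set d := q1 - q2 with hd
  have F1 := foc hOopen hq1 hmax1 hdh1 hdg1 d
  have F2 := foc hOopen hq2 hmax2 hdh2 hdg2 d
  -- concavity monotonicity
  have hc1 := concave_foc hg hq1 hq2 hdg1
  have hc2 := concave_foc hg hq2 hq1 hdg2
  have hgmono : 0 ≤ fderiv ℝ g q2 d - fderiv ℝ g q1 d := by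
    have e1 : q2 - q1 = -d := by simp [hd]
    have e2 : q1 - q2 = d := rfl
    rw [e1, map_neg] at hc1
    rw [e2] at hc2
    linarith
  -- zeta inequality
  have hzeta : 0 ≤ ⟪ζ2, d⟫ - ⟪ζ1, d⟫ := by
    have h1 := hmax1 q2 hq2
    have h2 := hmax2 q1 hq1
    have e1 : ⟪ζ1, d⟫ = ⟪ζ1, q1⟫ - ⟪ζ1, q2⟫ := by rw [hd, inner_sub_right]
    have e2 : ⟪ζ2, d⟫ = ⟪ζ2, q1⟫ - ⟪ζ2, q2⟫ := by rw [hd, inner_sub_right]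
    linarith
  have key : 2 * α * ‖d‖ ^ 2 ≤ ⟪gradient h q2 - gradient h q1, d⟫ := by
    rw [inner_sub_left, inner_gradient_eq, inner_gradient_eq]
    have hq12 : ⟪q1, d⟫ - ⟪q2, d⟫ = ‖d‖ ^ 2 := by
      rw [← inner_sub_left, ← hd, real_inner_self_eq_norm_sq]
    nlinarith [hgmono, hzeta, F1, F2]
  refine ⟨key, ?_⟩
  have hcs : ⟪gradient h q2 - gradient h q1, d⟫ ≤ ‖gradient h q1 - gradient h q2‖ * ‖d‖ := by
    calc ⟪gradient h q2 - gradient h q1, d⟫ ≤ ‖gradient h q2 - gradient h q1‖ * ‖d‖ :=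
          real_inner_le_norm _ _
      _ = ‖gradient h q1 - gradient h q2‖ * ‖d‖ := by rw [norm_sub_rev]
  rcases eq_or_lt_of_le (norm_nonneg d) with h0 | h0
  · rw [← h0]
    positivity
  · have h2 : 2 * α * ‖d‖ ^ 2 ≤ ‖gradient h q1 - gradient h q2‖ * ‖d‖ := le_trans key hcs
    rw [pow_two, ← mul_assoc] at h2
    have := (mul_le_mul_iff_left₀ h0).mp h2
    rw [div_mul_eq_mul_div, le_div_iff₀ (by positivity), one_mul]
    linarith

end
end
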